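/- Let q be an odd prime, let c_2 ∈ {1, ..., q-1}, e_0 ∈ {1, ..., q-1}, and v_1, v_2, v_3 ∈ {0, ..., q-1}. Define S = Σ_{z_1=0}^{q-1} Σ_{z_2=0}^{q-1} sin(2(2v_1+1)π z_1/q) · sin(2(2v_2+1)π z_2/q) · sin(2(2v_3+1)π (z_1 + c_2 z_2 + e_0)/q), and set v_{10} = q - 1 - v_3 and v_{20} = v_3 c_2 + (c_2 - 1)(q+1)/2 (mod q), with v_{20} taken in {0,...,q-1}. Then: S = (q²/4) sin(2π(2v_3+1)e_0/q) if (v_1, v_2) equals (v_{10}, v_{20}) or (q-1-v_{10}, q-1-v_{20}); S = -(q²/4) sin(2π(2v_3+1)e_0/q) if (v_1, v_2) equals (v_{10}, q-1-v_{20}) or (q-1-v_{10}, v_{20}); and S = 0 otherwise. (When v_3 = (q-1)/2 the listed cases may overlap, but then sin(2π(2v_3+1)e_0/q) = 0, so all prescribed values agree.) -/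

import Mathlib

open Finset Real

namespace St18
noncomputable def ζ (q : ℕ) (m : ℤ) : ℂ := Complex.exp (2 * Real.pi * Complex.I * m / q)

lemma zeta_add (q : ℕ) (a b : ℤ) : ζ q (a + b) = ζ q a * ζ q b := by
  rw [ζ, ζ, ζ, ← Complex.exp_add]; congr 1; push_cast; ring

lemma zeta_eq_one (q : ℕ) (hq : 0 < q) (m : ℤ) : ζ q m = 1 ↔ (q : ℤ) ∣ m := by
  rw [ζ, Complex.exp_eq_one_iff]
  constructor
  · rintro ⟨n, hn⟩
    refine ⟨n, ?_⟩
    rw [mul_comm (q:ℤ) n]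
    have hq0 : (q : ℂ) ≠ 0 := Nat.cast_ne_zero.mpr hq.ne'
    have hπ : (Real.pi : ℂ) ≠ 0 := Complex.ofReal_ne_zero.mpr Real.pi_ne_zero
    have h2 : (2 : ℂ) * Real.pi * Complex.I ≠ 0 := by simp [Complex.I_ne_zero, hπ]
    have : (m : ℂ) = (n : ℂ) * q := by
      field_simp at hn
      apply mul_left_cancel₀ h2
      linear_combination (2 * (Real.pi:ℂ) * Complex.I) * hn
    exact_mod_cast this
  · rintro ⟨n, rfl⟩
    refine ⟨n, ?_⟩
    have hq0 : (q : ℂ) ≠ 0 := Nat.cast_ne_zero.mpr hq.ne'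
    push_cast
    field_simp

lemma zeta_pow (q : ℕ) (m : ℤ) (z : ℕ) : ζ q (m * z) = ζ q m ^ z := by
  induction z with
  | zero => simp [ζ]
  | succ n ih =>
      have : m * ((n : ℤ) + 1) = m * n + m := by ring
      rw [Nat.cast_succ, this, zeta_add, ih, pow_succ]

lemma sum_zeta (q : ℕ) (hq : 0 < q) (m : ℤ) :
    ∑ z ∈ range q, ζ q (m * z) = if (q : ℤ) ∣ m then (q : ℂ) else 0 := by
  have h : ∑ z ∈ range q, ζ q (m * z) = ∑ z ∈ range q, ζ q m ^ z :=
    Finset.sum_congr rfl fun z _ => zeta_pow q m z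
  rw [h]
  split_ifs with hd
  · rw [(zeta_eq_one q hq m).mpr hd]; simp
  · have hne : ζ q m ≠ 1 := fun h1 => hd ((zeta_eq_one q hq m).mp h1)
    rw [geom_sum_eq hne]
    have : ζ q m ^ q = 1 := by
      rw [← zeta_pow, (zeta_eq_one q hq _)]
      exact ⟨m, mul_comm m q⟩
    rw [this, sub_self, zero_div]

noncomputable def D (q : ℕ) (m n r : ℤ) : ℂ :=
  (if (q : ℤ) ∣ m then (q : ℂ) else 0) * ((if (q : ℤ) ∣ n then (q : ℂ) else 0) * ζ q r)

lemma dsum (q : ℕ) (hq : 0 < q) (m n r : ℤ) :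
    ∑ z1 ∈ range q, ∑ z2 ∈ range q, ζ q (m * z1 + n * z2 + r) = D q m n r := by
  have h : ∀ z1 z2 : ℕ, ζ q (m * z1 + n * z2 + r) = ζ q (m * z1) * (ζ q (n * z2) * ζ q r) := by
    intro z1 z2
    rw [zeta_add, zeta_add]
    ring
  calc ∑ z1 ∈ range q, ∑ z2 ∈ range q, ζ q (m * z1 + n * z2 + r)
      = ∑ z1 ∈ range q, ζ q (m * z1) * ((∑ z2 ∈ range q, ζ q (n * z2)) * ζ q r) := by
        refine Finset.sum_congr rfl fun z1 _ => ?_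
        rw [Finset.sum_congr rfl fun z2 _ => h z1 z2, ← Finset.mul_sum, ← Finset.sum_mul]
    _ = D q m n r := by
        rw [← Finset.sum_mul, sum_zeta q hq, D, sum_zeta q hq]

lemma sin_eq (q : ℕ) (x : ℝ) (m : ℤ) (hx : x = 2 * Real.pi * m / q) :
    ζ q m - ζ q (-m) = 2 * Complex.I * (Real.sin x : ℂ) := by
  rw [hx, Complex.ofReal_sin, Complex.sin]
  have h1 : ζ q m = Complex.exp (((2 * Real.pi * (m:ℝ) / q : ℝ) : ℂ) * Complex.I) := by
    rw [ζ]; congr 1; push_cast; ring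
  have h2 : ζ q (-m) = Complex.exp (-(((2 * Real.pi * (m:ℝ) / q : ℝ) : ℂ)) * Complex.I) := by
    rw [ζ]; congr 1; push_cast; ring
  rw [h1, h2]
  set E1 := Complex.exp (((2 * Real.pi * (m:ℝ) / q : ℝ) : ℂ) * Complex.I) with hE1
  set E2 := Complex.exp (-(((2 * Real.pi * (m:ℝ) / q : ℝ) : ℂ)) * Complex.I) with hE2
  linear_combination (E1 - E2) * Complex.I_sq

lemma div8 (a b c t : ℂ) (h : a * b * c = t) :
    a / (2*Complex.I) * (b / (2*Complex.I)) * (c / (2*Complex.I)) = Complex.I / 8 * t := by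
  rw [← h]
  have hI := Complex.I_ne_zero
  field_simp
  linear_combination (a * b * c * (8 - 8 * Complex.I ^ 2)) * Complex.I_sq

lemma comb (q : ℕ) (c2 e0 : ℕ) (a b c : ℤ) (z1 z2 : ℕ) :
    ζ q (a * z1) * ζ q (b * z2) * ζ q (c * ((z1:ℤ) + c2 * z2 + e0)) =
      ζ q ((a + c) * z1 + (b + c2 * c) * z2 + c * e0) := by
  rw [← zeta_add, ← zeta_add]
  congr 1
  push_cast
  ring

lemma Sval (q : ℕ) (hq : 0 < q) (c2 e0 v1 v2 v3 : ℕ) :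
    ((∑ z1 ∈ Finset.range q, ∑ z2 ∈ Finset.range q,
      Real.sin (2 * (2 * (v1 : ℝ) + 1) * Real.pi * (z1 : ℝ) / q) *
        Real.sin (2 * (2 * (v2 : ℝ) + 1) * Real.pi * (z2 : ℝ) / q) *
        Real.sin (2 * (2 * (v3 : ℝ) + 1) * Real.pi *
          ((z1 : ℝ) + (c2 : ℝ) * (z2 : ℝ) + (e0 : ℝ)) / q) : ℝ) : ℂ) =
    Complex.I / 8 *
      (D q ((2*v1+1) + (2*v3+1)) ((2*v2+1) + c2 * (2*v3+1)) ((2*v3+1) * e0)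
       - D q ((2*v1+1) + -(2*v3+1)) ((2*v2+1) + c2 * -(2*v3+1)) (-(2*v3+1) * e0)
       - D q ((2*v1+1) + (2*v3+1)) (-(2*v2+1) + c2 * (2*v3+1)) ((2*v3+1) * e0)
       + D q ((2*v1+1) + -(2*v3+1)) (-(2*v2+1) + c2 * -(2*v3+1)) (-(2*v3+1) * e0)
       - D q (-(2*v1+1) + (2*v3+1)) ((2*v2+1) + c2 * (2*v3+1)) ((2*v3+1) * e0)
       + D q (-(2*v1+1) + -(2*v3+1)) ((2*v2+1) + c2 * -(2*v3+1)) (-(2*v3+1) * e0)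
       + D q (-(2*v1+1) + (2*v3+1)) (-(2*v2+1) + c2 * (2*v3+1)) ((2*v3+1) * e0)
       - D q (-(2*v1+1) + -(2*v3+1)) (-(2*v2+1) + c2 * -(2*v3+1)) (-(2*v3+1) * e0)) := by
  have hsin : ∀ (x : ℝ) (m : ℤ), x = 2 * Real.pi * m / q →
      ((Real.sin x : ℝ) : ℂ) = (ζ q m - ζ q (-m)) / (2 * Complex.I) := by
    intro x m hx
    rw [eq_div_iff (by simp [Complex.I_ne_zero] : (2:ℂ) * Complex.I ≠ 0)]
    linear_combination - sin_eq q x m hx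
  set k1 : ℤ := 2*v1+1
  set k2 : ℤ := 2*v2+1
  set k3 : ℤ := 2*v3+1
  simp only [Complex.ofReal_sum, Complex.ofReal_mul]
  have key : ∀ z1 z2 : ℕ,
      ((Real.sin (2 * (2 * (v1 : ℝ) + 1) * Real.pi * (z1 : ℝ) / q) : ℝ) : ℂ) *
        ((Real.sin (2 * (2 * (v2 : ℝ) + 1) * Real.pi * (z2 : ℝ) / q) : ℝ) : ℂ) *
        ((Real.sin (2 * (2 * (v3 : ℝ) + 1) * Real.pi *
          ((z1 : ℝ) + (c2 : ℝ) * (z2 : ℝ) + (e0 : ℝ)) / q) : ℝ) : ℂ) =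
      Complex.I / 8 *
        (ζ q ((k1 + k3) * z1 + (k2 + c2 * k3) * z2 + k3 * e0)
         - ζ q ((k1 + -k3) * z1 + (k2 + c2 * -k3) * z2 + -k3 * e0)
         - ζ q ((k1 + k3) * z1 + (-k2 + c2 * k3) * z2 + k3 * e0)
         + ζ q ((k1 + -k3) * z1 + (-k2 + c2 * -k3) * z2 + -k3 * e0)
         - ζ q ((-k1 + k3) * z1 + (k2 + c2 * k3) * z2 + k3 * e0)
         + ζ q ((-k1 + -k3) * z1 + (k2 + c2 * -k3) * z2 + -k3 * e0)
         + ζ q ((-k1 + k3) * z1 + (-k2 + c2 * k3) * z2 + k3 * e0)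
         - ζ q ((-k1 + -k3) * z1 + (-k2 + c2 * -k3) * z2 + -k3 * e0)) := by
    intro z1 z2
    rw [hsin _ (k1 * z1) (by push_cast [k1]; ring),
        hsin _ (k2 * z2) (by push_cast [k2]; ring),
        hsin _ (k3 * ((z1:ℤ) + c2 * z2 + e0)) (by push_cast [k3]; ring)]
    apply div8
    rw [show -(k1 * (z1:ℤ)) = (-k1) * z1 by ring,
        show -(k2 * (z2:ℤ)) = (-k2) * z2 by ring,
        show -(k3 * ((z1:ℤ) + c2 * z2 + e0)) = (-k3) * ((z1:ℤ) + c2 * z2 + e0) by ring]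
    linear_combination comb q c2 e0 k1 k2 k3 z1 z2
      - comb q c2 e0 k1 k2 (-k3) z1 z2
      - comb q c2 e0 k1 (-k2) k3 z1 z2
      + comb q c2 e0 k1 (-k2) (-k3) z1 z2
      - comb q c2 e0 (-k1) k2 k3 z1 z2
      + comb q c2 e0 (-k1) k2 (-k3) z1 z2
      + comb q c2 e0 (-k1) (-k2) k3 z1 z2
      - comb q c2 e0 (-k1) (-k2) (-k3) z1 z2
  calc (∑ z1 ∈ Finset.range q, ∑ z2 ∈ Finset.range q,
        ((Real.sin (2 * (2 * (v1 : ℝ) + 1) * Real.pi * (z1 : ℝ) / q) : ℝ) : ℂ) *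
        ((Real.sin (2 * (2 * (v2 : ℝ) + 1) * Real.pi * (z2 : ℝ) / q) : ℝ) : ℂ) *
        ((Real.sin (2 * (2 * (v3 : ℝ) + 1) * Real.pi *
          ((z1 : ℝ) + (c2 : ℝ) * (z2 : ℝ) + (e0 : ℝ)) / q) : ℝ) : ℂ))
      = ∑ z1 ∈ Finset.range q, ∑ z2 ∈ Finset.range q, Complex.I / 8 *
        (ζ q ((k1 + k3) * z1 + (k2 + c2 * k3) * z2 + k3 * e0)
         - ζ q ((k1 + -k3) * z1 + (k2 + c2 * -k3) * z2 + -k3 * e0)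
         - ζ q ((k1 + k3) * z1 + (-k2 + c2 * k3) * z2 + k3 * e0)
         + ζ q ((k1 + -k3) * z1 + (-k2 + c2 * -k3) * z2 + -k3 * e0)
         - ζ q ((-k1 + k3) * z1 + (k2 + c2 * k3) * z2 + k3 * e0)
         + ζ q ((-k1 + -k3) * z1 + (k2 + c2 * -k3) * z2 + -k3 * e0)
         + ζ q ((-k1 + k3) * z1 + (-k2 + c2 * k3) * z2 + k3 * e0)
         - ζ q ((-k1 + -k3) * z1 + (-k2 + c2 * -k3) * z2 + -k3 * e0)) := by
        exact Finset.sum_congr rfl fun z1 _ => Finset.sum_congr rfl fun z2 _ => key z1 z2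
    _ = _ := by
        simp only [← Finset.mul_sum]
        congr 1
        simp only [Finset.sum_add_distrib, Finset.sum_sub_distrib]
        rw [dsum q hq, dsum q hq, dsum q hq, dsum q hq, dsum q hq, dsum q hq, dsum q hq, dsum q hq]

lemma not_dvd_two (q : ℕ) (hq : q.Prime) (hodd : Odd q) : ¬ q ∣ 2 := by
  intro h
  have := (Nat.prime_dvd_prime_iff_eq hq Nat.prime_two).mp h
  rw [Nat.odd_iff] at hodd
  omega

lemma eq_q_of_dvd (q s : ℕ) (h1 : 0 < s) (h2 : s < 2 * q) (hd : q ∣ s) : s = q := by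
  obtain ⟨c, rfl⟩ := hd
  rcases Nat.lt_or_ge c 2 with h | h
  · interval_cases c <;> omega
  · have : q * 2 ≤ q * c := Nat.mul_le_mul_left q h
    omega

lemma dvd_sum_iff (q a b : ℕ) (hq : q.Prime) (hodd : Odd q) (ha : a < q) (hb : b < q) :
    (q : ℤ) ∣ (2 * a + 1) + (2 * b + 1) ↔ a + b + 1 = q := by
  constructor
  · intro h
    have h2 : ((2 * (a + b + 1) : ℕ) : ℤ) = (2 * a + 1) + (2 * b + 1) := by push_cast; ring
    rw [← h2, Int.natCast_dvd_natCast] at h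
    have hn : q ∣ a + b + 1 := ((Nat.Prime.dvd_mul hq).mp h).resolve_left (not_dvd_two q hq hodd)
    exact eq_q_of_dvd q _ (by omega) (by omega) hn
  · intro h
    exact ⟨2, by push_cast [← h]; push_cast; omega⟩

lemma dvd_diff_iff (q a b : ℕ) (hq : q.Prime) (hodd : Odd q) (ha : a < q) (hb : b < q) :
    (q : ℤ) ∣ (2 * a + 1) - (2 * b + 1) ↔ a = b := by
  constructor
  · intro h
    have h2 : ((2 : ℤ) * a + 1) - (2 * b + 1) = 2 * ((a : ℤ) - b) := by ring
    rw [h2] at h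
    have hqp : Prime (q : ℤ) := Nat.prime_iff_prime_int.mp hq
    have h3 : (q : ℤ) ∣ ((a : ℤ) - b) := by
      rcases hqp.dvd_mul.mp h with h' | h'
      · exfalso
        exact not_dvd_two q hq hodd (by exact_mod_cast h')
      · exact h'
    have h4 : (a : ℤ) - b = 0 := by
      refine Int.eq_zero_of_dvd_of_natAbs_lt_natAbs h3 ?_
      have : ((a : ℤ) - b).natAbs < q := by
        rcases Nat.le_total a b with h' | h' <;>
          [rw [show (a:ℤ) - b = -(((b - a : ℕ) : ℤ)) by omega];
           rw [show (a:ℤ) - b = ((a - b : ℕ) : ℤ) by omega]] <;>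
        simp [Int.natAbs_neg] <;> omega
      simpa using this
    omega
  · rintro rfl
    simp

lemma deg_iff (q a : ℕ) (hq : 0 < q) (ha : a < q) :
    (q : ℤ) ∣ (2 * a + 1) ↔ 2 * a + 1 = q := by
  constructor
  · intro h
    have : ((2 * a + 1 : ℕ) : ℤ) = 2 * (a : ℤ) + 1 := by push_cast; ring
    rw [← this, Int.natCast_dvd_natCast] at h
    exact eq_q_of_dvd q _ (by omega) (by omega) h
  · intro h
    exact ⟨1, by push_cast [← h]; push_cast; ring⟩

lemma hkey (q c2 v3 : ℕ) (hc2 : 1 ≤ c2) (hodd : Odd q) (hq : 0 < q) :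
    (q : ℤ) ∣ (2 * ((v3 * c2 + (c2 - 1) * ((q + 1) / 2)) % q : ℕ) + 1) - (c2 : ℤ) * (2 * v3 + 1) := by
  set w : ℕ := v3 * c2 + (c2 - 1) * ((q + 1) / 2) with hw
  have hhalf : 2 * ((q + 1) / 2) = q + 1 := by
    rw [Nat.odd_iff] at hodd; omega
  have h2w : 2 * w + (q + 1) = 2 * (v3 * c2) + c2 * (q + 1) := by
    calc 2 * w + (q + 1) = 2 * (v3 * c2) + (c2 - 1) * (2 * ((q + 1) / 2)) + (q + 1) := by
          rw [hw]; ring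
      _ = 2 * (v3 * c2) + ((c2 - 1) + 1) * (q + 1) := by rw [hhalf]; ring
      _ = 2 * (v3 * c2) + c2 * (q + 1) := by
          congr 2
          omega
  have hmod : w % q + q * (w / q) = w := Nat.mod_add_div w q
  refine ⟨(c2 : ℤ) - 1 - 2 * (w / q : ℕ), ?_⟩
  have h1 : ((w % q : ℕ) : ℤ) + q * ((w / q : ℕ) : ℤ) = (w : ℤ) := by exact_mod_cast hmod
  have h2 : 2 * (w : ℤ) + (q + 1) = 2 * ((v3 : ℤ) * c2) + c2 * (q + 1) := by exact_mod_cast h2w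
  linear_combination 2 * h1 + h2

end St18

open Finset Real St18


/-- the exact evaluation of
`S = ∑_{z₁,z₂=0}^{q-1} sin(2(2v₁+1)πz₁/q) sin(2(2v₂+1)πz₂/q) sin(2(2v₃+1)π(z₁+c₂z₂+e₀)/q)`
for an odd prime `q`: with `v₁₀ = q-1-v₃` and `v₂₀ = v₃c₂ + (c₂-1)(q+1)/2 (mod q)`,
`S = (q²/4)sin(2π(2v₃+1)e₀/q)` if `(v₁,v₂) ∈ {(v₁₀,v₂₀), (q-1-v₁₀, q-1-v₂₀)}`,
`S = -(q²/4)sin(2π(2v₃+1)e₀/q)` if `(v₁,v₂) ∈ {(v₁₀, q-1-v₂₀), (q-1-v₁₀, v₂₀)}`,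
and `S = 0` otherwise. -/
theorem statement18 (q : ℕ) (hq : q.Prime) (hodd : Odd q)
    (c2 e0 : ℕ) (hc2 : 1 ≤ c2) (hc2' : c2 ≤ q - 1) (he0 : 1 ≤ e0) (he0' : e0 ≤ q - 1)
    (v1 v2 v3 : ℕ) (hv1 : v1 ≤ q - 1) (hv2 : v2 ≤ q - 1) (hv3 : v3 ≤ q - 1) :
    let S : ℝ := ∑ z1 ∈ Finset.range q, ∑ z2 ∈ Finset.range q,
      Real.sin (2 * (2 * (v1 : ℝ) + 1) * π * (z1 : ℝ) / q) *
        Real.sin (2 * (2 * (v2 : ℝ) + 1) * π * (z2 : ℝ) / q) *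
        Real.sin (2 * (2 * (v3 : ℝ) + 1) * π * ((z1 : ℝ) + (c2 : ℝ) * (z2 : ℝ) + (e0 : ℝ)) / q)
    let v10 : ℕ := q - 1 - v3
    let v20 : ℕ := (v3 * c2 + (c2 - 1) * ((q + 1) / 2)) % q
    (((v1, v2) = (v10, v20) ∨ (v1, v2) = (q - 1 - v10, q - 1 - v20)) →
        S = (q : ℝ) ^ 2 / 4 * Real.sin (2 * π * (2 * (v3 : ℝ) + 1) * (e0 : ℝ) / q)) ∧
    (((v1, v2) = (v10, q - 1 - v20) ∨ (v1, v2) = (q - 1 - v10, v20)) →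
        S = -((q : ℝ) ^ 2 / 4) * Real.sin (2 * π * (2 * (v3 : ℝ) + 1) * (e0 : ℝ) / q)) ∧
    (¬((v1, v2) = (v10, v20) ∨ (v1, v2) = (q - 1 - v10, q - 1 - v20) ∨
        (v1, v2) = (v10, q - 1 - v20) ∨ (v1, v2) = (q - 1 - v10, v20)) →
        S = 0) := by
  intro S v10 v20
  have hq0 : 0 < q := hq.pos
  have hq1 : 1 < q := hq.one_lt
  have hv1' : v1 < q := by omega
  have hv2' : v2 < q := by omega
  have hv3' : v3 < q := by omega
  have hc2q : c2 < q := by omega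
  have hv10d : v10 = q - 1 - v3 := rfl
  have hv20d : v20 = (v3 * c2 + (c2 - 1) * ((q + 1) / 2)) % q := rfl
  have hv20lt : v20 < q := Nat.mod_lt _ hq0
  by_cases hdeg : 2 * v3 + 1 = q
  · -- degenerate case
    have hqR : (q : ℝ) ≠ 0 := Nat.cast_ne_zero.mpr hq0.ne'
    have hcast : 2 * (v3 : ℝ) + 1 = (q : ℝ) := by exact_mod_cast congrArg (Nat.cast (R := ℝ)) hdeg
    have hsin0 : Real.sin (2 * π * (2 * (v3 : ℝ) + 1) * (e0 : ℝ) / q) = 0 := by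
      have harg : 2 * π * (2 * (v3 : ℝ) + 1) * (e0 : ℝ) / q = ((2 * e0 : ℤ) : ℝ) * π := by
        rw [hcast]; push_cast; field_simp
      rw [harg, Real.sin_int_mul_pi]
    have hS0 : S = 0 := by
      have : S = ∑ z1 ∈ Finset.range q, ∑ z2 ∈ Finset.range q,
        Real.sin (2 * (2 * (v1 : ℝ) + 1) * π * (z1 : ℝ) / q) *
        Real.sin (2 * (2 * (v2 : ℝ) + 1) * π * (z2 : ℝ) / q) *
        Real.sin (2 * (2 * (v3 : ℝ) + 1) * π * ((z1 : ℝ) + (c2 : ℝ) * (z2 : ℝ) + (e0 : ℝ)) / q) := rfl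
      rw [this]
      apply Finset.sum_eq_zero; intro z1 _
      apply Finset.sum_eq_zero; intro z2 _
      have harg : 2 * (2 * (v3 : ℝ) + 1) * π * ((z1 : ℝ) + (c2 : ℝ) * (z2 : ℝ) + (e0 : ℝ)) / q
          = ((2 * (z1 + c2 * z2 + e0) : ℤ) : ℝ) * π := by
        rw [show 2 * (2 * (v3 : ℝ) + 1) * π = 2 * π * (2 * (v3:ℝ) + 1) from by ring, hcast]
        push_cast; field_simp
      rw [harg, Real.sin_int_mul_pi, mul_zero]
    exact ⟨fun _ => by rw [hS0, hsin0]; ring, fun _ => by rw [hS0, hsin0]; ring, fun _ => hS0⟩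
  · -- nondegenerate
    have h3 : ¬ (q : ℤ) ∣ (2 * (v3 : ℤ) + 1) := fun h => hdeg ((deg_iff q v3 hq0 hv3').mp h)
    have hqp : Prime (q : ℤ) := Nat.prime_iff_prime_int.mp hq
    have hk : (q : ℤ) ∣ (2 * (v20 : ℤ) + 1) - (c2 : ℤ) * (2 * v3 + 1) := by
      rw [hv20d]; exact_mod_cast hkey q c2 v3 hc2 hodd hq0
    have hd1 : (q : ℤ) ∣ (2 * (v1:ℤ) + 1) + (2 * (v3:ℤ) + 1) ↔ v1 = v10 := by
      rw [dvd_sum_iff q v1 v3 hq hodd hv1' hv3']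
      omega
    have hd2 : (q : ℤ) ∣ (2 * (v1:ℤ) + 1) - (2 * (v3:ℤ) + 1) ↔ v1 = v3 :=
      dvd_diff_iff q v1 v3 hq hodd hv1' hv3'
    have hd3 : (q : ℤ) ∣ (2 * (v2:ℤ) + 1) - (c2:ℤ) * (2 * (v3:ℤ) + 1) ↔ v2 = v20 := by
      constructor
      · intro h
        have h2 := dvd_sub h hk
        rw [show (2 * (v2:ℤ) + 1) - (c2:ℤ) * (2 * (v3:ℤ) + 1) -
            ((2 * (v20 : ℤ) + 1) - (c2 : ℤ) * (2 * v3 + 1)) =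
            (2 * (v2:ℤ) + 1) - (2 * (v20:ℤ) + 1) from by ring] at h2
        exact (dvd_diff_iff q v2 v20 hq hodd hv2' hv20lt).mp h2
      · intro h
        have h2 := dvd_add ((dvd_diff_iff q v2 v20 hq hodd hv2' hv20lt).mpr h) hk
        rw [show (2 * (v2:ℤ) + 1) - (2 * (v20:ℤ) + 1) +
            ((2 * (v20 : ℤ) + 1) - (c2 : ℤ) * (2 * v3 + 1)) =
            (2 * (v2:ℤ) + 1) - (c2:ℤ) * (2 * (v3:ℤ) + 1) from by ring] at h2
        exact h2
    have hd4 : (q : ℤ) ∣ (2 * (v2:ℤ) + 1) + (c2:ℤ) * (2 * (v3:ℤ) + 1) ↔ v2 = q - 1 - v20 := by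
      have step : (q : ℤ) ∣ (2 * (v2:ℤ) + 1) + (c2:ℤ) * (2 * (v3:ℤ) + 1) ↔
          (q : ℤ) ∣ (2 * (v2:ℤ) + 1) + (2 * (v20:ℤ) + 1) := by
        constructor
        · intro h
          have h2 := dvd_add h hk
          rw [show (2 * (v2:ℤ) + 1) + (c2:ℤ) * (2 * (v3:ℤ) + 1) +
              ((2 * (v20 : ℤ) + 1) - (c2 : ℤ) * (2 * v3 + 1)) =
              (2 * (v2:ℤ) + 1) + (2 * (v20:ℤ) + 1) from by ring] at h2
          exact h2
        · intro h
          have h2 := dvd_sub h hk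
          rw [show (2 * (v2:ℤ) + 1) + (2 * (v20:ℤ) + 1) -
              ((2 * (v20 : ℤ) + 1) - (c2 : ℤ) * (2 * v3 + 1)) =
              (2 * (v2:ℤ) + 1) + (c2:ℤ) * (2 * (v3:ℤ) + 1) from by ring] at h2
          exact h2
      rw [step, dvd_sum_iff q v2 v20 hq hodd hv2' hv20lt]
      omega
    have hn20 : ¬ (2 * v20 + 1 = q) := by
      intro h
      have hdv : (q : ℤ) ∣ (c2 : ℤ) * (2 * (v3:ℤ) + 1) := by
        have h1 : (q : ℤ) ∣ (2 * (v20 : ℤ) + 1) := (deg_iff q v20 hq0 hv20lt).mpr h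
        have h2 := dvd_sub h1 hk
        rw [show (2 * (v20:ℤ) + 1) - ((2 * (v20 : ℤ) + 1) - (c2 : ℤ) * (2 * v3 + 1)) =
            (c2 : ℤ) * (2 * (v3:ℤ) + 1) from by ring] at h2
        exact h2
      rcases hqp.dvd_mul.mp hdv with h' | h'
      · have : q ∣ c2 := by exact_mod_cast h'
        have := Nat.le_of_dvd (by omega) this
        omega
      · exact h3 h'
    have hne1 : v10 ≠ v3 := by omega
    have hne2 : v20 ≠ q - 1 - v20 := by omega
    -- the complex formula
    have hS : (S : ℂ) = Complex.I / 8 *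
      (D q ((2*(v1:ℤ)+1) + (2*(v3:ℤ)+1)) ((2*(v2:ℤ)+1) + (c2:ℤ) * (2*(v3:ℤ)+1)) ((2*(v3:ℤ)+1) * e0)
       - D q ((2*(v1:ℤ)+1) + -(2*(v3:ℤ)+1)) ((2*(v2:ℤ)+1) + (c2:ℤ) * -(2*(v3:ℤ)+1)) (-(2*(v3:ℤ)+1) * e0)
       - D q ((2*(v1:ℤ)+1) + (2*(v3:ℤ)+1)) (-(2*(v2:ℤ)+1) + (c2:ℤ) * (2*(v3:ℤ)+1)) ((2*(v3:ℤ)+1) * e0)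
       + D q ((2*(v1:ℤ)+1) + -(2*(v3:ℤ)+1)) (-(2*(v2:ℤ)+1) + (c2:ℤ) * -(2*(v3:ℤ)+1)) (-(2*(v3:ℤ)+1) * e0)
       - D q (-(2*(v1:ℤ)+1) + (2*(v3:ℤ)+1)) ((2*(v2:ℤ)+1) + (c2:ℤ) * (2*(v3:ℤ)+1)) ((2*(v3:ℤ)+1) * e0)
       + D q (-(2*(v1:ℤ)+1) + -(2*(v3:ℤ)+1)) ((2*(v2:ℤ)+1) + (c2:ℤ) * -(2*(v3:ℤ)+1)) (-(2*(v3:ℤ)+1) * e0)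
       + D q (-(2*(v1:ℤ)+1) + (2*(v3:ℤ)+1)) (-(2*(v2:ℤ)+1) + (c2:ℤ) * (2*(v3:ℤ)+1)) ((2*(v3:ℤ)+1) * e0)
       - D q (-(2*(v1:ℤ)+1) + -(2*(v3:ℤ)+1)) (-(2*(v2:ℤ)+1) + (c2:ℤ) * -(2*(v3:ℤ)+1)) (-(2*(v3:ℤ)+1) * e0)) :=
      Sval q hq0 c2 e0 v1 v2 v3
    have hsin : ζ q ((2*(v3:ℤ)+1) * e0) - ζ q (-((2*(v3:ℤ)+1) * e0)) =
        2 * Complex.I * ((Real.sin (2 * π * (2 * (v3 : ℝ) + 1) * (e0 : ℝ) / q) : ℝ) : ℂ) :=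
      sin_eq q _ _ (by push_cast; ring)
    have hnorm : (-(2*(v3:ℤ)+1) * (e0:ℤ)) = -((2*(v3:ℤ)+1) * e0) := by ring
    rw [hnorm] at hS
    have hn1 : ((2*(v1:ℤ)+1) + -(2*(v3:ℤ)+1)) = (2*(v1:ℤ)+1) - (2*(v3:ℤ)+1) := by ring
    have hn2 : (-(2*(v1:ℤ)+1) + (2*(v3:ℤ)+1)) = -((2*(v1:ℤ)+1) - (2*(v3:ℤ)+1)) := by ring
    have hn3 : (-(2*(v1:ℤ)+1) + -(2*(v3:ℤ)+1)) = -((2*(v1:ℤ)+1) + (2*(v3:ℤ)+1)) := by ring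
    have hn4 : ((2*(v2:ℤ)+1) + (c2:ℤ) * -(2*(v3:ℤ)+1)) = (2*(v2:ℤ)+1) - (c2:ℤ) * (2*(v3:ℤ)+1) := by ring
    have hn5 : (-(2*(v2:ℤ)+1) + (c2:ℤ) * (2*(v3:ℤ)+1)) = -((2*(v2:ℤ)+1) - (c2:ℤ) * (2*(v3:ℤ)+1)) := by ring
    have hn6 : (-(2*(v2:ℤ)+1) + (c2:ℤ) * -(2*(v3:ℤ)+1)) = -((2*(v2:ℤ)+1) + (c2:ℤ) * (2*(v3:ℤ)+1)) := by ring
    rw [hn1, hn2, hn3, hn4, hn5, hn6] at hS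
    refine ⟨?_, ?_, ?_⟩
    · rintro (h | h) <;> rw [Prod.mk.injEq] at h <;> obtain ⟨e1, e2⟩ := h
      · have d1 := hd1.mpr e1
        have nd2 : ¬ (q : ℤ) ∣ (2 * (v1:ℤ) + 1) - (2 * (v3:ℤ) + 1) :=
          fun hh => by have := hd2.mp hh; omega
        have d3 := hd3.mpr e2
        have nd4 : ¬ (q : ℤ) ∣ (2 * (v2:ℤ) + 1) + (c2:ℤ) * (2 * (v3:ℤ) + 1) :=
          fun hh => by have := hd4.mp hh; omega
        have goal : (S : ℂ) = (((q : ℝ) ^ 2 / 4 * Real.sin (2 * π * (2 * (v3 : ℝ) + 1) * (e0 : ℝ) / q) : ℝ) : ℂ) := by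
          rw [hS]
          simp only [D, dvd_neg, d1, nd2, d3, nd4, if_true, if_false, if_pos, if_neg,
            not_false_iff, iff_true, mul_zero, zero_mul, sub_zero, zero_sub, add_zero, zero_add]
          rw [Complex.ofReal_mul, Complex.ofReal_div, Complex.ofReal_pow,
            Complex.ofReal_natCast, Complex.ofReal_ofNat]
          linear_combination (-(Complex.I) * (q:ℂ)^2 / 8) * hsin +
            (-((q:ℂ)^2 * ((Real.sin (2 * π * (2 * (v3 : ℝ) + 1) * (e0 : ℝ) / q) : ℝ) : ℂ)) / 4) * Complex.I_sq
        exact_mod_cast goal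
      · have d2 := hd2.mpr (by omega : v1 = v3)
        have nd1 : ¬ (q : ℤ) ∣ (2 * (v1:ℤ) + 1) + (2 * (v3:ℤ) + 1) :=
          fun hh => by have := hd1.mp hh; omega
        have d4 := hd4.mpr e2
        have nd3 : ¬ (q : ℤ) ∣ (2 * (v2:ℤ) + 1) - (c2:ℤ) * (2 * (v3:ℤ) + 1) :=
          fun hh => by have := hd3.mp hh; omega
        have goal : (S : ℂ) = (((q : ℝ) ^ 2 / 4 * Real.sin (2 * π * (2 * (v3 : ℝ) + 1) * (e0 : ℝ) / q) : ℝ) : ℂ) := by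
          rw [hS]
          simp only [D, dvd_neg, d2, nd1, d4, nd3, if_true, if_false, if_pos, if_neg,
            not_false_iff, iff_true, mul_zero, zero_mul, sub_zero, zero_sub, add_zero, zero_add]
          rw [Complex.ofReal_mul, Complex.ofReal_div, Complex.ofReal_pow,
            Complex.ofReal_natCast, Complex.ofReal_ofNat]
          linear_combination (-(Complex.I) * (q:ℂ)^2 / 8) * hsin +
            (-((q:ℂ)^2 * ((Real.sin (2 * π * (2 * (v3 : ℝ) + 1) * (e0 : ℝ) / q) : ℝ) : ℂ)) / 4) * Complex.I_sq
        exact_mod_cast goal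
    · rintro (h | h) <;> rw [Prod.mk.injEq] at h <;> obtain ⟨e1, e2⟩ := h
      · have d1 := hd1.mpr e1
        have nd2 : ¬ (q : ℤ) ∣ (2 * (v1:ℤ) + 1) - (2 * (v3:ℤ) + 1) :=
          fun hh => by have := hd2.mp hh; omega
        have d4 := hd4.mpr e2
        have nd3 : ¬ (q : ℤ) ∣ (2 * (v2:ℤ) + 1) - (c2:ℤ) * (2 * (v3:ℤ) + 1) :=
          fun hh => by have := hd3.mp hh; omega
        have goal : (S : ℂ) = ((-((q : ℝ) ^ 2 / 4) * Real.sin (2 * π * (2 * (v3 : ℝ) + 1) * (e0 : ℝ) / q) : ℝ) : ℂ) := by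
          rw [hS]
          simp only [D, dvd_neg, d1, nd2, d4, nd3, if_true, if_false, if_pos, if_neg,
            not_false_iff, iff_true, mul_zero, zero_mul, sub_zero, zero_sub, add_zero, zero_add]
          rw [Complex.ofReal_mul, Complex.ofReal_neg, Complex.ofReal_div, Complex.ofReal_pow,
            Complex.ofReal_natCast, Complex.ofReal_ofNat]
          linear_combination (Complex.I * (q:ℂ)^2 / 8) * hsin +
            (((q:ℂ)^2 * ((Real.sin (2 * π * (2 * (v3 : ℝ) + 1) * (e0 : ℝ) / q) : ℝ) : ℂ)) / 4) * Complex.I_sq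
        exact_mod_cast goal
      · have d2 := hd2.mpr (by omega : v1 = v3)
        have nd1 : ¬ (q : ℤ) ∣ (2 * (v1:ℤ) + 1) + (2 * (v3:ℤ) + 1) :=
          fun hh => by have := hd1.mp hh; omega
        have d3 := hd3.mpr e2
        have nd4 : ¬ (q : ℤ) ∣ (2 * (v2:ℤ) + 1) + (c2:ℤ) * (2 * (v3:ℤ) + 1) :=
          fun hh => by have := hd4.mp hh; omega
        have goal : (S : ℂ) = ((-((q : ℝ) ^ 2 / 4) * Real.sin (2 * π * (2 * (v3 : ℝ) + 1) * (e0 : ℝ) / q) : ℝ) : ℂ) := by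
          rw [hS]
          simp only [D, dvd_neg, d2, nd1, d3, nd4, if_true, if_false, if_pos, if_neg,
            not_false_iff, iff_true, mul_zero, zero_mul, sub_zero, zero_sub, add_zero, zero_add]
          rw [Complex.ofReal_mul, Complex.ofReal_neg, Complex.ofReal_div, Complex.ofReal_pow,
            Complex.ofReal_natCast, Complex.ofReal_ofNat]
          linear_combination (Complex.I * (q:ℂ)^2 / 8) * hsin +
            (((q:ℂ)^2 * ((Real.sin (2 * π * (2 * (v3 : ℝ) + 1) * (e0 : ℝ) / q) : ℝ) : ℂ)) / 4) * Complex.I_sq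
        exact_mod_cast goal
    · intro h
      have hP1 : (v1, v2) ≠ (v10, v20) := fun hh => h (Or.inl hh)
      have hP2 : (v1, v2) ≠ (q - 1 - v10, q - 1 - v20) := fun hh => h (Or.inr (Or.inl hh))
      have hP3 : (v1, v2) ≠ (v10, q - 1 - v20) := fun hh => h (Or.inr (Or.inr (Or.inl hh)))
      have hP4 : (v1, v2) ≠ (q - 1 - v10, v20) := fun hh => h (Or.inr (Or.inr (Or.inr hh)))
      have hC : (S : ℂ) = ((0 : ℝ) : ℂ) := by
        by_cases c1 : v1 = v10
        · have nd3 : ¬ (q : ℤ) ∣ (2 * (v2:ℤ) + 1) - (c2:ℤ) * (2 * (v3:ℤ) + 1) :=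
            fun hh => hP1 (by rw [c1, hd3.mp hh])
          have nd4 : ¬ (q : ℤ) ∣ (2 * (v2:ℤ) + 1) + (c2:ℤ) * (2 * (v3:ℤ) + 1) :=
            fun hh => hP3 (by rw [c1, hd4.mp hh])
          rw [hS]
          simp only [D, dvd_neg, nd3, nd4, if_true, if_false, if_pos, if_neg,
            not_false_iff, iff_true, mul_zero, zero_mul, sub_zero, zero_sub, add_zero, zero_add]
          norm_num
        · by_cases c2x : v1 = v3
          · have e1 : v1 = q - 1 - v10 := by omega
            have nd3 : ¬ (q : ℤ) ∣ (2 * (v2:ℤ) + 1) - (c2:ℤ) * (2 * (v3:ℤ) + 1) :=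
              fun hh => hP4 (by rw [e1, hd3.mp hh])
            have nd4 : ¬ (q : ℤ) ∣ (2 * (v2:ℤ) + 1) + (c2:ℤ) * (2 * (v3:ℤ) + 1) :=
              fun hh => hP2 (by rw [e1, hd4.mp hh])
            rw [hS]
            simp only [D, dvd_neg, nd3, nd4, if_true, if_false, if_pos, if_neg,
              not_false_iff, iff_true, mul_zero, zero_mul, sub_zero, zero_sub, add_zero, zero_add]
            norm_num
          · have nd1 : ¬ (q : ℤ) ∣ (2 * (v1:ℤ) + 1) + (2 * (v3:ℤ) + 1) :=
              fun hh => c1 (hd1.mp hh)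
            have nd2 : ¬ (q : ℤ) ∣ (2 * (v1:ℤ) + 1) - (2 * (v3:ℤ) + 1) :=
              fun hh => c2x (hd2.mp hh)
            rw [hS]
            simp only [D, dvd_neg, nd1, nd2, if_true, if_false, if_pos, if_neg,
              not_false_iff, iff_true, mul_zero, zero_mul, sub_zero, zero_sub, add_zero, zero_add]
            norm_num
      exact_mod_cast hC
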